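/- Let d ≥ 1 be an integer, α ∈ (0,1), γ > d, and define ψ_1 : ℝ^d → ℝ by ψ_1(x) = (1 + |x|²)^{−γ/2}. Then for every x ∈ ℝ^d the function y ↦ (ψ_1(x+y) + ψ_1(x−y) − 2ψ_1(x)) / |y|^{d+2α} is Lebesgue integrable on ℝ^d, and the function F(x) := ∫_{ℝ^d} (ψ_1(x+y) + ψ_1(x−y) − 2ψ_1(x)) |y|^{−d−2α} dy is bounded on ℝ^d. -/

import Mathlib

open MeasureTheory
open Metric Set Module

lemma secdiff1d (γ a b c : ℝ) (hγ : 0 < γ) (hc : 0 ≤ c)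
    (h1 : ∀ t : ℝ, 1 ≤ a + 2*b*t + c*t^2) (h2 : b^2 ≤ a*c) :
    |(a + 2*b + c) ^ (-γ/2) + (a - 2*b + c) ^ (-γ/2) - 2 * a ^ (-γ/2)|
      ≤ (2*(γ^2+3*γ)) * c := by
  set q : ℝ → ℝ := fun t => a + 2*b*t + c*t^2 with hqdef
  have hqpos : ∀ t, 0 < q t := fun t => zero_lt_one.trans_le (h1 t)
  have hq' : ∀ t : ℝ, HasDerivAt q (2*b + 2*c*t) t := by
    intro t
    have h₁ : HasDerivAt (fun s : ℝ => 2*b*s) (2*b) t := by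
      simpa using (hasDerivAt_id t).const_mul (2*b)
    have h₂ : HasDerivAt (fun s : ℝ => c*s^2) (c*(2*t)) t := by
      simpa using (hasDerivAt_pow 2 t).const_mul c
    have := ((h₁.const_add a).add h₂)
    exact this.congr_deriv (by ring)
  set g : ℝ → ℝ := fun t => q t ^ (-γ/2) with hgdef
  set G : ℝ → ℝ := fun t => (2*b + 2*c*t) * (-γ/2) * q t ^ (-γ/2 - 1) with hGdef
  have hg' : ∀ t, HasDerivAt g (G t) t := fun t =>
    (hq' t).rpow_const (Or.inl (hqpos t).ne')
  set G' : ℝ → ℝ := fun t =>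
    (2*c) * (-γ/2) * q t ^ (-γ/2-1)
      + ((2*b+2*c*t) * (-γ/2)) * ((2*b+2*c*t) * (-γ/2-1) * q t ^ (-γ/2-2)) with hG'def
  have hG' : ∀ t, HasDerivAt G (G' t) t := by
    intro t
    have h₁ : HasDerivAt (fun s : ℝ => (2*b + 2*c*s) * (-γ/2)) (2*c * (-γ/2)) t := by
      have h : HasDerivAt (fun s : ℝ => 2*b + 2*c*s) (2*c) t := by
        simpa using ((hasDerivAt_id t).const_mul (2*c)).const_add (2*b)
      exact h.mul_const _
    have h₂ : HasDerivAt (fun s : ℝ => q s ^ (-γ/2-1))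
        ((2*b+2*c*t) * (-γ/2-1) * q t ^ (-γ/2-2)) t := by
      have := (hq' t).rpow_const (p := -γ/2-1) (Or.inl (hqpos t).ne')
      convert this using 2
      ring
    exact h₁.mul h₂
  -- bound on G'
  have hGb : ∀ t, |G' t| ≤ (γ^2+3*γ)*c := by
    intro t
    have hr0 : (0:ℝ) ≤ q t ^ (-γ/2-1) := Real.rpow_nonneg (hqpos t).le _
    have hs0 : (0:ℝ) ≤ q t ^ (-γ/2-2) := Real.rpow_nonneg (hqpos t).le _
    have hr1 : q t ^ (-γ/2-1) ≤ 1 :=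
      Real.rpow_le_one_of_one_le_of_nonpos (h1 t) (by linarith)
    have hsq : q t ^ (-γ/2-2) * q t = q t ^ (-γ/2-1) := by
      nth_rewrite 2 [show q t = q t ^ (1:ℝ) by rw [Real.rpow_one]]
      rw [← Real.rpow_add (hqpos t)]
      congr 1; ring
    have hu : (2*b+2*c*t)^2 ≤ 4 * q t * c := by
      simp only [hqdef]; nlinarith [h2]
    have t2eq : ((2*b+2*c*t) * (-γ/2)) * ((2*b+2*c*t) * (-γ/2-1) * q t ^ (-γ/2-2))
        = (2*b+2*c*t)^2 * ((γ/2)*(γ/2+1)) * q t ^ (-γ/2-2) := by ring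
    have t2b : ((2*b+2*c*t) * (-γ/2)) * ((2*b+2*c*t) * (-γ/2-1) * q t ^ (-γ/2-2))
        ≤ (γ^2+2*γ)*c := by
      rw [t2eq]
      calc (2*b+2*c*t)^2 * ((γ/2)*(γ/2+1)) * q t ^ (-γ/2-2)
          ≤ (4 * q t * c) * ((γ/2)*(γ/2+1)) * q t ^ (-γ/2-2) := by
            apply mul_le_mul_of_nonneg_right _ hs0
            apply mul_le_mul_of_nonneg_right hu (by positivity)
        _ = (γ^2+2*γ)*c * (q t ^ (-γ/2-2) * q t) := by ring
        _ = (γ^2+2*γ)*c * q t ^ (-γ/2-1) := by rw [hsq]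
        _ ≤ (γ^2+2*γ)*c * 1 := by
            apply mul_le_mul_of_nonneg_left hr1 (by positivity)
        _ = (γ^2+2*γ)*c := by ring
    have t2nn : 0 ≤ ((2*b+2*c*t) * (-γ/2)) * ((2*b+2*c*t) * (-γ/2-1) * q t ^ (-γ/2-2)) := by
      rw [t2eq]; positivity
    have t1b : |2*c * (-γ/2) * q t ^ (-γ/2-1)| ≤ γ * c := by
      rw [abs_mul, abs_mul, abs_of_nonneg (by positivity : (0:ℝ) ≤ 2*c),
        abs_of_nonpos (by linarith : -γ/2 ≤ 0), abs_of_nonneg hr0]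
      calc 2*c * -(-γ/2) * q t ^ (-γ/2-1) = γ*c* q t ^ (-γ/2-1) := by ring
        _ ≤ γ*c*1 := by apply mul_le_mul_of_nonneg_left hr1 (by positivity)
        _ = γ*c := by ring
    calc |G' t| ≤ |2*c * (-γ/2) * q t ^ (-γ/2-1)|
          + |((2*b+2*c*t) * (-γ/2)) * ((2*b+2*c*t) * (-γ/2-1) * q t ^ (-γ/2-2))| := abs_add_le _ _
      _ ≤ γ*c + (γ^2+2*γ)*c := add_le_add t1b (by rw [abs_of_nonneg t2nn]; exact t2b)
      _ = (γ^2+3*γ)*c := by ring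
  -- MVT for G on ℝ : |G t - G (-t)| ≤ M c * |2t|
  have hGdiff : ∀ t : ℝ, t ∈ Set.Icc (0:ℝ) 1 → ‖G t - G (-t)‖ ≤ ((γ^2+3*γ)*c) * 2 := by
    intro t ht
    have := (convex_univ (𝕜 := ℝ) (E := ℝ)).norm_image_sub_le_of_norm_hasDerivWithin_le
      (f := G) (f' := G') (C := (γ^2+3*γ)*c)
      (fun s _ => (hG' s).hasDerivWithinAt)
      (fun s _ => by rw [Real.norm_eq_abs]; exact hGb s)
      (Set.mem_univ (-t)) (Set.mem_univ t)
    refine this.trans ?_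
    rw [Real.norm_eq_abs, sub_neg_eq_add, show t + t = 2*t by ring, abs_mul]
    have : |(2:ℝ)| * |t| ≤ 2 := by
      rw [abs_two]
      nlinarith [ht.1, ht.2, abs_of_nonneg ht.1]
    exact mul_le_mul_of_nonneg_left this (by positivity)
  -- φ t = g t + g (-t)
  set φ : ℝ → ℝ := fun t => g t + g (-t) with hφdef
  have hφ' : ∀ t, HasDerivAt φ (G t - G (-t)) t := by
    intro t
    have h₂ : HasDerivAt (fun s : ℝ => g (-s)) (G (-t) * (-1)) t :=
      (hg' (-t)).comp t (hasDerivAt_neg t)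
    have := (hg' t).add h₂
    exact this.congr_deriv (by ring)
  have key : ‖φ 1 - φ 0‖ ≤ ((γ^2+3*γ)*c) * 2 * ‖(1:ℝ) - 0‖ := by
    apply (convex_Icc (0:ℝ) 1).norm_image_sub_le_of_norm_hasDerivWithin_le
      (f := φ) (f' := fun t => G t - G (-t))
      (fun s _ => (hφ' s).hasDerivWithinAt)
      (fun s hs => hGdiff s hs)
      (Set.left_mem_Icc.mpr zero_le_one) (Set.right_mem_Icc.mpr zero_le_one)
  have hq1 : q 1 = a + 2*b + c := by simp [hqdef]
  have hqm1 : q (-1) = a - 2*b + c := by simp [hqdef]; ring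
  have hq0 : q 0 = a := by simp [hqdef]
  have hφ1 : φ 1 - φ 0 = (a + 2*b + c) ^ (-γ/2) + (a - 2*b + c) ^ (-γ/2) - 2 * a ^ (-γ/2) := by
    simp only [hφdef, hgdef, neg_zero, hq1, hqm1, hq0, neg_neg]
    ring
  rw [← hφ1]
  have := key
  simp only [sub_zero, norm_one, mul_one, Real.norm_eq_abs] at this
  exact this.trans_eq (by ring)


open RealInnerProductSpace in
lemma secdiff_eucl {d : ℕ} (γ : ℝ) (hγ : 0 < γ) (x y : EuclideanSpace ℝ (Fin d)) :
    |(1 + ‖x + y‖ ^ 2) ^ (-γ/2) + (1 + ‖x - y‖ ^ 2) ^ (-γ/2) - 2 * (1 + ‖x‖ ^ 2) ^ (-γ/2)|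
      ≤ (2*(γ^2+3*γ)) * ‖y‖^2 := by
  have hexp : ∀ t : ℝ, (1 + ‖x‖^2) + 2*⟪x, y⟫*t + ‖y‖^2*t^2 = 1 + ‖x + t • y‖^2 := by
    intro t
    rw [norm_add_sq_real, inner_smul_right, norm_smul]
    simp [Real.norm_eq_abs, mul_pow, sq_abs]
    ring
  have h1 : ∀ t : ℝ, 1 ≤ (1 + ‖x‖^2) + 2*⟪x, y⟫*t + ‖y‖^2*t^2 := by
    intro t
    rw [hexp t]
    nlinarith [sq_nonneg ‖x + t • y‖]
  have h2 : ⟪x, y⟫^2 ≤ (1 + ‖x‖^2) * ‖y‖^2 := by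
    have := real_inner_mul_inner_self_le x y
    rw [real_inner_self_eq_norm_sq, real_inner_self_eq_norm_sq] at this
    nlinarith [sq_nonneg ‖y‖]
  have := secdiff1d γ (1 + ‖x‖^2) ⟪x, y⟫ (‖y‖^2) hγ (by positivity) h1 h2
  have e1 : (1 + ‖x‖^2) + 2*⟪x, y⟫ + ‖y‖^2 = 1 + ‖x + y‖^2 := by
    have := hexp 1; simpa using this
  have e2 : (1 + ‖x‖^2) - 2*⟪x, y⟫ + ‖y‖^2 = 1 + ‖x - y‖^2 := by
    have := hexp (-1)
    simp only [neg_one_sq, one_smul, neg_smul, mul_one] at this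
    rw [show x + -y = x - y from by abel] at this
    linarith [this]
  rw [e1, e2] at this
  exact this

section IntHelp
open Metric Set Module
variable {E : Type*} [NormedAddCommGroup E] [NormedSpace ℝ E] [FiniteDimensional ℝ E]
  [MeasurableSpace E] [BorelSpace E] {μ : Measure E} [μ.IsAddHaarMeasure]

lemma meas_le_aux {r t : ℝ} (hr : r < 0) (ht : 0 < t) :
    μ {a : E | t ≤ ‖a‖ ^ r} ≤
      ENNReal.ofReal (t ^ (r⁻¹ * finrank ℝ E)) * μ (ball 0 1) := by
  have hsub : {a : E | t ≤ ‖a‖ ^ r} ⊆ closedBall 0 (t ^ r⁻¹) := by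
    intro a ha
    simp only [mem_setOf_eq] at ha
    have hna : 0 < ‖a‖ := by
      rcases (norm_nonneg a).lt_or_eq with h | h
      · exact h
      · exfalso
        rw [← h, Real.zero_rpow hr.ne] at ha
        linarith
    rw [mem_closedBall, dist_zero_right]
    exact (Real.le_rpow_inv_iff_of_neg hna ht hr).mpr ha
  refine (measure_mono hsub).trans ?_
  rw [Measure.addHaar_closedBall μ _ (Real.rpow_nonneg ht.le _),
    ← Real.rpow_natCast (t ^ r⁻¹) (finrank ℝ E), ← Real.rpow_mul ht.le]

lemma integrableOn_rpow_closedBall {p : ℝ} (hp : -(finrank ℝ E : ℝ) < p) :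
    IntegrableOn (fun y : E => ‖y‖ ^ p) (closedBall 0 1) μ := by
  have hm : Measurable fun y : E => ‖y‖ ^ p := by fun_prop
  have hmeas : AEStronglyMeasurable (fun y : E => ‖y‖ ^ p)
      (μ.restrict (closedBall 0 1)) := by
    apply Measurable.aestronglyMeasurable
    fun_prop
  by_cases hp0 : 0 ≤ p
  · apply Integrable.mono' (g := fun _ : E => (1:ℝ))
      (integrableOn_const measure_closedBall_lt_top.ne) hmeas
    rw [ae_restrict_iff' measurableSet_closedBall]
    filter_upwards with y hy
    rw [Real.norm_eq_abs, abs_of_nonneg (Real.rpow_nonneg (norm_nonneg y) p)]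
    exact Real.rpow_le_one (norm_nonneg y) (by simpa using hy) hp0
  push_neg at hp0
  refine ⟨hmeas, ?_⟩
  rw [HasFiniteIntegral,
    lintegral_enorm_of_nonneg (fun y => Real.rpow_nonneg (norm_nonneg y) p),
    lintegral_eq_lintegral_meas_le _
      (Filter.Eventually.of_forall fun y => Real.rpow_nonneg (norm_nonneg y) p)
      (hm.aemeasurable)]
  have hq : (p⁻¹ * finrank ℝ E) < -1 := by
    rw [mul_comm, ← div_eq_mul_inv]
    rw [div_lt_iff_of_neg hp0]
    push_cast at hp ⊢
    linarith
  calc ∫⁻ t in Ioi (0:ℝ), (μ.restrict (closedBall 0 1)) {a | t ≤ ‖a‖ ^ p}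
      ≤ ∫⁻ t in Ioc (0:ℝ) 1 ∪ Ioi 1, (μ.restrict (closedBall 0 1)) {a | t ≤ ‖a‖ ^ p} :=
        lintegral_mono_set Ioi_subset_Ioc_union_Ioi
    _ ≤ (∫⁻ t in Ioc (0:ℝ) 1, (μ.restrict (closedBall 0 1)) {a | t ≤ ‖a‖ ^ p})
        + ∫⁻ t in Ioi (1:ℝ), (μ.restrict (closedBall 0 1)) {a | t ≤ ‖a‖ ^ p} :=
        lintegral_union_le _ _ _
    _ < ⊤ := by
        refine ENNReal.add_lt_top.2 ⟨?_, ?_⟩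
        · calc ∫⁻ t in Ioc (0:ℝ) 1, (μ.restrict (closedBall 0 1)) {a | t ≤ ‖a‖ ^ p}
              ≤ ∫⁻ _ in Ioc (0:ℝ) 1, μ (closedBall (0:E) 1) := by
                apply lintegral_mono
                intro t
                calc (μ.restrict (closedBall 0 1)) {a | t ≤ ‖a‖ ^ p}
                    ≤ (μ.restrict (closedBall 0 1)) univ := measure_mono (subset_univ _)
                  _ = μ (closedBall 0 1) := by
                      rw [Measure.restrict_apply_univ]
            _ = μ (closedBall (0:E) 1) * volume (Ioc (0:ℝ) 1) := by
                rw [setLIntegral_const]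
            _ < ⊤ := ENNReal.mul_lt_top measure_closedBall_lt_top (by simp)
        · calc ∫⁻ t in Ioi (1:ℝ), (μ.restrict (closedBall 0 1)) {a | t ≤ ‖a‖ ^ p}
              ≤ ∫⁻ t in Ioi (1:ℝ),
                  ENNReal.ofReal (t ^ (p⁻¹ * finrank ℝ E)) * μ (ball 0 1) := by
                apply setLIntegral_mono' measurableSet_Ioi
                intro t ht
                exact le_trans (Measure.restrict_le_self _)
                  (meas_le_aux hp0 (lt_trans one_pos ht))
            _ = (∫⁻ t in Ioi (1:ℝ), ENNReal.ofReal (t ^ (p⁻¹ * finrank ℝ E)))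
                  * μ (ball 0 1) := by
                rw [lintegral_mul_const' _ _ measure_ball_lt_top.ne]
            _ < ⊤ := by
                refine ENNReal.mul_lt_top ?_ measure_ball_lt_top
                exact IntegrableOn.setLIntegral_lt_top
                  (integrableOn_Ioi_rpow_of_lt hq one_pos)

lemma integrableOn_rpow_compl {q : ℝ} (hq : q < -(finrank ℝ E : ℝ)) :
    IntegrableOn (fun y : E => ‖y‖ ^ q) (closedBall 0 1)ᶜ μ := by
  have hm : Measurable fun y : E => ‖y‖ ^ q := by fun_prop
  have hq0 : q < 0 := lt_of_lt_of_le hq (neg_nonpos.mpr (Nat.cast_nonneg _))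
  have hmeas : AEStronglyMeasurable (fun y : E => ‖y‖ ^ q)
      (μ.restrict (closedBall 0 1)ᶜ) :=
    Measurable.aestronglyMeasurable (by fun_prop)
  refine ⟨hmeas, ?_⟩
  rw [HasFiniteIntegral,
    lintegral_enorm_of_nonneg (fun y => Real.rpow_nonneg (norm_nonneg y) q),
    lintegral_eq_lintegral_meas_le _
      (Filter.Eventually.of_forall fun y => Real.rpow_nonneg (norm_nonneg y) q)
      (hm.aemeasurable)]
  have hmeasT : ∀ t : ℝ, MeasurableSet {a : E | t ≤ ‖a‖ ^ q} := by
    intro t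
    exact measurableSet_le measurable_const (by fun_prop)
  have hq' : (-1:ℝ) < q⁻¹ * finrank ℝ E := by
    rw [mul_comm, ← div_eq_mul_inv, lt_div_iff_of_neg hq0]
    push_cast at hq ⊢
    linarith
  calc ∫⁻ t in Ioi (0:ℝ), (μ.restrict (closedBall 0 1)ᶜ) {a | t ≤ ‖a‖ ^ q}
      ≤ ∫⁻ t in Ioc (0:ℝ) 1 ∪ Ioi 1, (μ.restrict (closedBall 0 1)ᶜ) {a | t ≤ ‖a‖ ^ q} :=
        lintegral_mono_set Ioi_subset_Ioc_union_Ioi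
    _ ≤ (∫⁻ t in Ioc (0:ℝ) 1, (μ.restrict (closedBall 0 1)ᶜ) {a | t ≤ ‖a‖ ^ q})
        + ∫⁻ t in Ioi (1:ℝ), (μ.restrict (closedBall 0 1)ᶜ) {a | t ≤ ‖a‖ ^ q} :=
        lintegral_union_le _ _ _
    _ < ⊤ := by
        refine ENNReal.add_lt_top.2 ⟨?_, ?_⟩
        · calc ∫⁻ t in Ioc (0:ℝ) 1, (μ.restrict (closedBall 0 1)ᶜ) {a | t ≤ ‖a‖ ^ q}
              ≤ ∫⁻ t in Ioc (0:ℝ) 1,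
                  ENNReal.ofReal (t ^ (q⁻¹ * finrank ℝ E)) * μ (ball 0 1) := by
                apply setLIntegral_mono' measurableSet_Ioc
                intro t ht
                exact le_trans (Measure.restrict_le_self _) (meas_le_aux hq0 ht.1)
            _ = (∫⁻ t in Ioc (0:ℝ) 1, ENNReal.ofReal (t ^ (q⁻¹ * finrank ℝ E)))
                  * μ (ball 0 1) := by
                rw [lintegral_mul_const' _ _ measure_ball_lt_top.ne]
            _ < ⊤ := by
                refine ENNReal.mul_lt_top ?_ measure_ball_lt_top
                apply IntegrableOn.setLIntegral_lt_top
                rw [← intervalIntegrable_iff_integrableOn_Ioc_of_le zero_le_one]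
                exact intervalIntegral.intervalIntegrable_rpow' hq'
        · have hz : ∀ t ∈ Ioi (1:ℝ), (μ.restrict (closedBall 0 1)ᶜ) {a | t ≤ ‖a‖ ^ q} = 0 := by
            intro t ht
            rw [Measure.restrict_apply (hmeasT t)]
            convert measure_empty (μ := μ)
            rw [eq_empty_iff_forall_notMem]
            rintro a ⟨ha1, ha2⟩
            simp only [mem_setOf_eq] at ha1
            simp only [mem_compl_iff, mem_closedBall, dist_zero_right, not_le] at ha2
            have : ‖a‖ ^ q ≤ 1 := Real.rpow_le_one_of_one_le_of_nonpos ha2.le hq0.le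
            have ht1 : (1:ℝ) < t := ht
            linarith
          rw [setLIntegral_congr_fun measurableSet_Ioi hz]
          simp

end IntHelp

theorem stmt_10 (d : ℕ) (hd : 1 ≤ d) (α : ℝ) (hα0 : 0 < α) (hα1 : α < 1)
    (γ : ℝ) (hγ : (d : ℝ) < γ) :
    (∀ x : EuclideanSpace ℝ (Fin d),
      Integrable (fun y : EuclideanSpace ℝ (Fin d) =>
        ((1 + ‖x + y‖ ^ 2) ^ (-γ / 2) + (1 + ‖x - y‖ ^ 2) ^ (-γ / 2)
          - 2 * (1 + ‖x‖ ^ 2) ^ (-γ / 2)) / ‖y‖ ^ ((d : ℝ) + 2 * α))) ∧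
    ∃ C : ℝ, ∀ x : EuclideanSpace ℝ (Fin d),
      |∫ y : EuclideanSpace ℝ (Fin d),
        ((1 + ‖x + y‖ ^ 2) ^ (-γ / 2) + (1 + ‖x - y‖ ^ 2) ^ (-γ / 2)
          - 2 * (1 + ‖x‖ ^ 2) ^ (-γ / 2)) * ‖y‖ ^ (-(d : ℝ) - 2 * α)| ≤ C := by
  have hγ0 : 0 < γ := lt_of_le_of_lt (Nat.cast_nonneg d) hγ
  set C₁ : ℝ := 2*(γ^2+3*γ) with hC₁def
  have hC₁0 : (0:ℝ) ≤ C₁ := by positivity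
  set N : EuclideanSpace ℝ (Fin d) → EuclideanSpace ℝ (Fin d) → ℝ := fun x y =>
    (1 + ‖x + y‖ ^ 2) ^ (-γ / 2) + (1 + ‖x - y‖ ^ 2) ^ (-γ / 2)
      - 2 * (1 + ‖x‖ ^ 2) ^ (-γ / 2) with hNdef
  have hterm : ∀ z : EuclideanSpace ℝ (Fin d),
      (0:ℝ) ≤ (1 + ‖z‖ ^ 2) ^ (-γ/2) ∧ (1 + ‖z‖ ^ 2) ^ (-γ/2) ≤ 1 := by
    intro z
    constructor
    · positivity
    · exact Real.rpow_le_one_of_one_le_of_nonpos (by nlinarith [sq_nonneg ‖z‖]) (by linarith)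
  have hN4 : ∀ x y, |N x y| ≤ 4 := by
    intro x y
    rw [abs_le]
    obtain ⟨h1, h2⟩ := hterm (x + y)
    obtain ⟨h3, h4⟩ := hterm (x - y)
    obtain ⟨h5, h6⟩ := hterm x
    constructor <;> simp only [hNdef] <;> nlinarith
  have hN2 : ∀ x y, |N x y| ≤ C₁ * ‖y‖ ^ 2 := by
    intro x y
    simpa [hC₁def, hNdef] using secdiff_eucl γ hγ0 x y
  have hNmeas : ∀ x, Measurable (N x) := by
    intro x
    apply Measurable.sub
    · apply Measurable.add <;>
      · apply Continuous.measurable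
        apply Continuous.rpow_const
        · fun_prop
        · intro z
          left
          positivity
    · fun_prop
  have hfrank : (finrank ℝ (EuclideanSpace ℝ (Fin d)) : ℝ) = (d:ℝ) := by
    rw [finrank_euclideanSpace_fin]
  have hp1 : -(finrank ℝ (EuclideanSpace ℝ (Fin d)) : ℝ) < 2 - (d:ℝ) - 2*α := by
    rw [hfrank]; linarith
  have hp2 : -(d:ℝ) - 2*α < -(finrank ℝ (EuclideanSpace ℝ (Fin d)) : ℝ) := by
    rw [hfrank]; linarith
  have hDm : Measurable fun y : EuclideanSpace ℝ (Fin d) => ‖y‖ ^ ((d:ℝ) + 2*α) := by fun_prop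
  -- pointwise bounds for the quotient
  have hbound1 : ∀ x y, ‖N x y / ‖y‖ ^ ((d:ℝ) + 2*α)‖ ≤ C₁ * ‖y‖ ^ (2 - (d:ℝ) - 2*α) := by
    intro x y
    rcases eq_or_ne y 0 with rfl | hy0
    · rw [norm_zero, Real.zero_rpow (by positivity : ((d:ℝ)+2*α) ≠ 0), div_zero, norm_zero]
      exact mul_nonneg hC₁0 (Real.rpow_nonneg le_rfl _)
    · have hy' : (0:ℝ) < ‖y‖ := norm_pos_iff.mpr hy0
      have hD : (0:ℝ) < ‖y‖ ^ ((d:ℝ)+2*α) := Real.rpow_pos_of_pos hy' _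
      rw [Real.norm_eq_abs, abs_div, abs_of_nonneg hD.le, div_le_iff₀ hD]
      have hmul : ‖y‖ ^ (2 - (d:ℝ) - 2*α) * ‖y‖ ^ ((d:ℝ) + 2*α) = ‖y‖ ^ 2 := by
        rw [← Real.rpow_add hy',
          show (2 - (d:ℝ) - 2*α + ((d:ℝ) + 2*α)) = (2:ℝ) by ring, Real.rpow_two]
      calc |N x y| ≤ C₁ * ‖y‖ ^ 2 := hN2 x y
        _ = C₁ * ‖y‖ ^ (2 - (d:ℝ) - 2*α) * ‖y‖ ^ ((d:ℝ) + 2*α) := by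
            rw [← hmul]; exact (mul_assoc _ _ _).symm
  have hbound2 : ∀ x, ∀ y : EuclideanSpace ℝ (Fin d), y ∈ (closedBall (0:EuclideanSpace ℝ (Fin d)) 1)ᶜ →
      ‖N x y / ‖y‖ ^ ((d:ℝ) + 2*α)‖ ≤ 4 * ‖y‖ ^ (-(d:ℝ) - 2*α) := by
    intro x y hy
    simp only [mem_compl_iff, mem_closedBall, dist_zero_right, not_le] at hy
    have hy' : (0:ℝ) < ‖y‖ := lt_trans one_pos hy
    have hD : (0:ℝ) < ‖y‖ ^ ((d:ℝ)+2*α) := Real.rpow_pos_of_pos hy' _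
    rw [Real.norm_eq_abs, abs_div, abs_of_nonneg hD.le, div_le_iff₀ hD,
      show -(d:ℝ)-2*α = -((d:ℝ)+2*α) by ring, Real.rpow_neg (norm_nonneg y)]
    calc |N x y| ≤ 4 := hN4 x y
      _ = 4 * ((‖y‖ ^ ((d:ℝ)+2*α))⁻¹ * ‖y‖ ^ ((d:ℝ)+2*α)) := by
          rw [inv_mul_cancel₀ hD.ne']; ring
      _ = 4 * (‖y‖ ^ ((d:ℝ)+2*α))⁻¹ * ‖y‖ ^ ((d:ℝ)+2*α) := by ring
  have hint : ∀ x : EuclideanSpace ℝ (Fin d),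
      Integrable (fun y => N x y / ‖y‖ ^ ((d:ℝ) + 2*α)) := by
    intro x
    have hmeas : AEStronglyMeasurable (fun y => N x y / ‖y‖ ^ ((d:ℝ) + 2*α))
        (volume : Measure (EuclideanSpace ℝ (Fin d))) :=
      ((hNmeas x).div hDm).aestronglyMeasurable
    rw [← integrableOn_univ, ← Set.union_compl_self (closedBall (0:EuclideanSpace ℝ (Fin d)) 1)]
    apply IntegrableOn.union
    · apply Integrable.mono' ((integrableOn_rpow_closedBall hp1).const_mul C₁)
        hmeas.restrict
      exact Filter.Eventually.of_forall fun y => hbound1 x y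
    · apply Integrable.mono' ((integrableOn_rpow_compl hp2).const_mul 4)
        hmeas.restrict
      rw [ae_restrict_iff' measurableSet_closedBall.compl]
      exact Filter.Eventually.of_forall fun y hy => hbound2 x y hy
  refine ⟨hint, ?_⟩
  set C : ℝ := C₁ * (∫ y in closedBall (0:EuclideanSpace ℝ (Fin d)) 1, ‖y‖ ^ (2 - (d:ℝ) - 2*α))
      + 4 * ∫ y in (closedBall (0:EuclideanSpace ℝ (Fin d)) 1)ᶜ, ‖y‖ ^ (-(d:ℝ) - 2*α) with hCdef
  refine ⟨C, fun x => ?_⟩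
  have hfun : (fun y : EuclideanSpace ℝ (Fin d) => N x y * ‖y‖ ^ (-(d:ℝ) - 2*α))
      = fun y => N x y / ‖y‖ ^ ((d:ℝ) + 2*α) := by
    funext y
    rw [div_eq_mul_inv, show -(d:ℝ)-2*α = -((d:ℝ)+2*α) by ring, Real.rpow_neg (norm_nonneg y)]
  calc |∫ y, N x y * ‖y‖ ^ (-(d:ℝ) - 2*α)|
      = |∫ y, N x y / ‖y‖ ^ ((d:ℝ) + 2*α)| := by rw [hfun]
    _ ≤ ∫ y, ‖N x y / ‖y‖ ^ ((d:ℝ) + 2*α)‖ := by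
        rw [← Real.norm_eq_abs]
        exact norm_integral_le_integral_norm _
    _ = (∫ y in closedBall (0:EuclideanSpace ℝ (Fin d)) 1, ‖N x y / ‖y‖ ^ ((d:ℝ) + 2*α)‖)
        + ∫ y in (closedBall (0:EuclideanSpace ℝ (Fin d)) 1)ᶜ, ‖N x y / ‖y‖ ^ ((d:ℝ) + 2*α)‖ :=
        (integral_add_compl measurableSet_closedBall (hint x).norm).symm
    _ ≤ C₁ * (∫ y in closedBall (0:EuclideanSpace ℝ (Fin d)) 1, ‖y‖ ^ (2 - (d:ℝ) - 2*α))
        + 4 * ∫ y in (closedBall (0:EuclideanSpace ℝ (Fin d)) 1)ᶜ, ‖y‖ ^ (-(d:ℝ) - 2*α) := by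
        apply add_le_add
        · rw [← integral_const_mul]
          apply setIntegral_mono_on ((hint x).norm.integrableOn)
            ((integrableOn_rpow_closedBall hp1).const_mul C₁) measurableSet_closedBall
          intro y _
          exact hbound1 x y
        · rw [← integral_const_mul]
          apply setIntegral_mono_on ((hint x).norm.integrableOn)
            ((integrableOn_rpow_compl hp2).const_mul 4) measurableSet_closedBall.compl
          intro y hy
          exact hbound2 x y hy
    _ = C := hCdef.symm
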